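/- Let A be a unital C*-algebra and (z_k) a sequence in A such that all partial sums of Σ z_k* z_k are bounded by 1 in norm. Define z_{i+1} := y_{i+1} (1 - Σ_{k=1}^{i} z_k* z_k)^{1/2} for a sequence (y_i) of positive elements with ‖y_i‖ ≤ 1. Then for every n, Σ_{k=1}^{n} z_k* z_k ≤ 1. -/

import Mathlib

/-- Let `y i` be positive elements of norm at most `1` in a unital
C*-algebra `A`, and define inductively `z 0 = y 0`,
`z (i+1) = y (i+1) * (1 - ∑_{k ≤ i} (z k)* (z k))^{1/2}` (positive square root).
Then all partial sums satisfy `∑_{k < n} (z k)* (z k) ≤ 1`. -/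
theorem stmt4 {A : Type} [CStarAlgebra A] [PartialOrder A] [StarOrderedRing A]
    (y : ℕ → A) (hy_pos : ∀ i, 0 ≤ y i) (hy_norm : ∀ i, ‖y i‖ ≤ 1)
    (z : ℕ → A) (hz0 : z 0 = y 0)
    (hz : ∀ i : ℕ,
      z (i + 1) = y (i + 1) * CFC.sqrt (1 - ∑ k ∈ Finset.range (i + 1), star (z k) * z k)) :
    (∀ n : ℕ, 0 ≤ 1 - ∑ k ∈ Finset.range n, star (z k) * z k) ∧
      ∀ n : ℕ, ∑ k ∈ Finset.range n, star (z k) * z k ≤ 1 := by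
  have hysq : ∀ i, (y i) * (y i) ≤ 1 := by
    intro i
    have h1 : 0 ≤ y i * y i := by
      simpa [(hy_pos i).star_eq] using star_mul_self_nonneg (y i)
    rw [← CStarAlgebra.norm_le_one_iff_of_nonneg _ h1]
    calc ‖y i * y i‖ ≤ ‖y i‖ * ‖y i‖ := norm_mul_le _ _
      _ ≤ 1 * 1 := mul_le_mul (hy_norm i) (hy_norm i) (norm_nonneg _) zero_le_one
      _ = 1 := one_mul 1
  have key : ∀ n : ℕ, ∑ k ∈ Finset.range n, star (z k) * z k ≤ 1 := by
    intro n
    induction n with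
    | zero => simp
    | succ n ih =>
      rw [Finset.sum_range_succ]
      match n with
      | 0 =>
        simpa [hz0, (hy_pos 0).star_eq] using hysq 0
      | Nat.succ m =>
        set S := ∑ k ∈ Finset.range (m + 1), star (z k) * z k with hS
        have hpos : (0 : A) ≤ 1 - S := sub_nonneg.mpr ih
        set s := CFC.sqrt (1 - S) with hs
        have hsnn : (0 : A) ≤ s := CFC.sqrt_nonneg _
        have hzz : star (z (m + 1)) * z (m + 1) ≤ 1 - S := by
          have hzm : z (m + 1) = y (m + 1) * s := hz m
          have : star (z (m + 1)) * z (m + 1)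
              = star s * (y (m + 1) * y (m + 1)) * s := by
            rw [hzm, star_mul, (hy_pos (m + 1)).star_eq]
            noncomm_ring
          rw [this]
          calc star s * (y (m + 1) * y (m + 1)) * s ≤ star s * 1 * s :=
                star_left_conjugate_le_conjugate (hysq (m + 1)) s
            _ = 1 - S := by
                rw [mul_one, hsnn.star_eq, hs, CFC.sqrt_mul_sqrt_self _ hpos]
        calc S + star (z (m + 1)) * z (m + 1) ≤ S + (1 - S) :=
              add_le_add_right hzz S
          _ = 1 := by abel
  exact ⟨fun n => sub_nonneg.mpr (key n), key⟩
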